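/- For every β > 0 and every integer n ≥ 2, the function D(d) = L1(n,d)·L3(n,d) − L2(n,d)² is strictly monotone increasing in d on (0,∞). -/

import Mathlib

open Real Filter

/-- Entry `L1` of the Fisher information matrix for an equidistant design with
`n` points and step size `d`, covariance parameter `β`. -/
noncomputable def L1 (β : ℝ) (n : ℕ) (d : ℝ) : ℝ :=
  (2 - (n : ℝ) + n * exp (β * d)) / (exp (β * d) + 1)

/-- Entry `L2` of the Fisher information matrix. -/
noncomputable def L2 (β : ℝ) (n : ℕ) (d : ℝ) : ℝ :=
  d * ((n : ℝ) - 1) / 2 * L1 β n d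

/-- Entry `L3` of the Fisher information matrix. -/
noncomputable def L3 (β : ℝ) (n : ℕ) (d : ℝ) : ℝ :=
  d ^ 2 * ((n : ℝ) - 1) / (exp (2 * β * d) - 1) *
    ((n : ℝ) * (2 * n - 1) * (exp (β * d) - 1) ^ 2 / 6 + n * (exp (β * d) - 1) + 1)

set_option maxHeartbeats 1600000 in
/-- Key polynomial inequality: positivity of (a factor of) the derivative numerator. -/
lemma key_ineq (N u x p w : ℝ) (hN : 2 ≤ N) (hu : 0 < u) (hx : 0 < x)
    (hxe : x * (u + 1) ≤ u * (u + 2) / 2)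
    (hp : p = N ^ 2 * (N + 1) / 12 * u ^ 3 + 2 * N * (N + 1) / 3 * u ^ 2 + (2 * N + 1) * u + 2)
    (hw : w = (3 * (N ^ 2 * (N + 1) / 12) * u ^ 2 + 2 * (2 * N * (N + 1) / 3) * u + (2 * N + 1))
        * (u * (u + 2)) - p * (3 * u + 2)) :
    0 < 2 * p * (u * (u + 2)) + x * (u + 1) * w := by
  subst hp hw
  have hN0 : (0 : ℝ) < N := by linarith
  have hu2 : (0 : ℝ) < u + 2 := by linarith
  have hu1 : (0 : ℝ) < u + 1 := by linarith
  -- lower bound for w : w ≥ -2*(u+1)*(u+2)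
  have hwlb : -(2 * (u + 1) * (u + 2)) ≤
      (3 * (N ^ 2 * (N + 1) / 12) * u ^ 2 + 2 * (2 * N * (N + 1) / 3) * u + (2 * N + 1))
        * (u * (u + 2)) -
      (N ^ 2 * (N + 1) / 12 * u ^ 3 + 2 * N * (N + 1) / 3 * u ^ 2 + (2 * N + 1) * u + 2)
        * (3 * u + 2) := by
    have h1 : (3 * (N ^ 2 * (N + 1) / 12) * u ^ 2 + 2 * (2 * N * (N + 1) / 3) * u + (2 * N + 1))
        * (u * (u + 2)) -
        (N ^ 2 * (N + 1) / 12 * u ^ 3 + 2 * N * (N + 1) / 3 * u ^ 2 + (2 * N + 1) * u + 2)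
        * (3 * u + 2) + 2 * (u + 1) * (u + 2)
        = N * (N + 1) * (N - 2) / 3 * u ^ 3 + 4 * N * (N - 2) / 3 * u ^ 2 := by ring
    have hN2 : (0:ℝ) ≤ N - 2 := by linarith
    have h2 : 0 ≤ N * (N + 1) * (N - 2) / 3 * u ^ 3 := by positivity
    have h3 : 0 ≤ 4 * N * (N - 2) / 3 * u ^ 2 := by positivity
    linarith [h1, h2, h3]
  -- hence x*(u+1)*w ≥ -u*(u+1)*(u+2)^2
  have hxu : 0 < x * (u + 1) := mul_pos hx hu1
  have hA : x * (u + 1) * (-(2 * (u + 1) * (u + 2))) ≤ x * (u + 1) *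
      ((3 * (N ^ 2 * (N + 1) / 12) * u ^ 2 + 2 * (2 * N * (N + 1) / 3) * u + (2 * N + 1))
        * (u * (u + 2)) -
      (N ^ 2 * (N + 1) / 12 * u ^ 3 + 2 * N * (N + 1) / 3 * u ^ 2 + (2 * N + 1) * u + 2)
        * (3 * u + 2)) :=
    mul_le_mul_of_nonneg_left hwlb hxu.le
  have hB : x * (u + 1) * (2 * (u + 1) * (u + 2)) ≤ u * (u + 2) / 2 * (2 * (u + 1) * (u + 2)) :=
    mul_le_mul_of_nonneg_right hxe (by positivity)
  -- main positivity: 2*p*(u*(u+2)) - u*(u+1)*(u+2)^2 > 0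
  have hc1 : (1 : ℝ) ≤ N ^ 2 * (N + 1) / 12 := by nlinarith
  have hc2 : (7 : ℝ) ≤ 4 * N * (N + 1) / 3 - 1 := by nlinarith
  have hu3 : (0:ℝ) < u ^ 3 := by positivity
  have hu2' : (0:ℝ) < u ^ 2 := by positivity
  have hQ : 0 < u * (u + 2) * (2 * (N ^ 2 * (N + 1) / 12) * u ^ 3
      + (4 * N * (N + 1) / 3 - 1) * u ^ 2 + (4 * N - 1) * u + 2) := by
    apply mul_pos (mul_pos hu hu2)
    linarith [mul_le_mul_of_nonneg_right hc1 hu3.le, mul_le_mul_of_nonneg_right hc2 hu2'.le,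
      mul_le_mul_of_nonneg_right hN hu.le, hu3, hu2', hu]
  have hring : 2 * (N ^ 2 * (N + 1) / 12 * u ^ 3 + 2 * N * (N + 1) / 3 * u ^ 2
        + (2 * N + 1) * u + 2) * (u * (u + 2)) - u * (u + 1) * (u + 2) ^ 2
      = u * (u + 2) * (2 * (N ^ 2 * (N + 1) / 12) * u ^ 3
        + (4 * N * (N + 1) / 3 - 1) * u ^ 2 + (4 * N - 1) * u + 2) := by ring
  linarith [hA, hB, hQ, hring]

set_option maxHeartbeats 1600000 in
/-- The D-optimality objective `D(d) = L1·L3 − L2²` is strictly monotone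
increasing in the step size `d` on `(0,∞)`. -/
theorem D_strictMonoOn (β : ℝ) (hβ : 0 < β) (n : ℕ) (hn : 2 ≤ n) :
    StrictMonoOn (fun d => L1 β n d * L3 β n d - L2 β n d ^ 2) (Set.Ioi (0 : ℝ)) := by
  set N : ℝ := (n : ℝ) with hNdef
  have hN : (2 : ℝ) ≤ N := by rw [hNdef]; exact_mod_cast hn
  -- the nicer closed form
  set g : ℝ → ℝ := fun d =>
    (N - 1) * (d ^ 2 * (N ^ 2 * (N + 1) / 12 * (exp (β * d) - 1) ^ 3
      + 2 * N * (N + 1) / 3 * (exp (β * d) - 1) ^ 2 + (2 * N + 1) * (exp (β * d) - 1) + 2))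
      / ((exp (β * d) - 1) * (exp (β * d) + 1) ^ 2) with hgdef
  -- the objective equals g on Ioi 0
  have heq : ∀ d ∈ Set.Ioi (0 : ℝ), L1 β n d * L3 β n d - L2 β n d ^ 2 = g d := by
    intro d hd
    have hd0 : 0 < d := hd
    have he1 : 1 < exp (β * d) := by
      nlinarith [Real.add_one_le_exp (β * d), mul_pos hβ hd0]
    have he2 : exp (2 * β * d) = exp (β * d) ^ 2 := by
      rw [sq, ← Real.exp_add]; congr 1; ring
    have h1 : exp (β * d) + 1 ≠ 0 := by positivity
    have h2 : exp (β * d) - 1 ≠ 0 := by linarith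
    have h3 : exp (β * d) ^ 2 - 1 ≠ 0 := by nlinarith
    simp only [hgdef, L1, L2, L3, he2, ← hNdef]
    field_simp
    ring
  -- derivative construction
  have hder : ∀ d ∈ Set.Ioi (0 : ℝ), HasDerivAt g
      (((N - 1) * (2 * d * (N ^ 2 * (N + 1) / 12 * (exp (β * d) - 1) ^ 3
          + 2 * N * (N + 1) / 3 * (exp (β * d) - 1) ^ 2 + (2 * N + 1) * (exp (β * d) - 1) + 2)
        + d ^ 2 * ((3 * (N ^ 2 * (N + 1) / 12) * (exp (β * d) - 1) ^ 2
          + 2 * (2 * N * (N + 1) / 3) * (exp (β * d) - 1) + (2 * N + 1)) * (exp (β * d) * β)))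
        * ((exp (β * d) - 1) * (exp (β * d) + 1) ^ 2)
        - (N - 1) * (d ^ 2 * (N ^ 2 * (N + 1) / 12 * (exp (β * d) - 1) ^ 3
          + 2 * N * (N + 1) / 3 * (exp (β * d) - 1) ^ 2 + (2 * N + 1) * (exp (β * d) - 1) + 2))
        * (exp (β * d) * β * (exp (β * d) + 1) ^ 2
          + (exp (β * d) - 1) * (2 * (exp (β * d) + 1) * (exp (β * d) * β))))
      / ((exp (β * d) - 1) * (exp (β * d) + 1) ^ 2) ^ 2) d := by
    intro d hd
    have hd0 : (0:ℝ) < d := hd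
    have he1 : 1 < exp (β * d) := by
      nlinarith [Real.add_one_le_exp (β * d), mul_pos hβ hd0]
    have hden_ne : (exp (β * d) - 1) * (exp (β * d) + 1) ^ 2 ≠ 0 := by
      have h2 : (0:ℝ) < exp (β * d) - 1 := by linarith
      positivity
    have hlin : HasDerivAt (fun d : ℝ => β * d) β d := by
      simpa using (hasDerivAt_id d).const_mul β
    have hexp : HasDerivAt (fun d : ℝ => exp (β * d)) (exp (β * d) * β) d := hlin.exp
    have hE : HasDerivAt (fun d : ℝ => exp (β * d) - 1) (exp (β * d) * β) d :=
      hexp.sub_const 1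
    have hE1 : HasDerivAt (fun d : ℝ => exp (β * d) + 1) (exp (β * d) * β) d :=
      hexp.add_const 1
    have hP : HasDerivAt (fun d : ℝ => N ^ 2 * (N + 1) / 12 * (exp (β * d) - 1) ^ 3
        + 2 * N * (N + 1) / 3 * (exp (β * d) - 1) ^ 2 + (2 * N + 1) * (exp (β * d) - 1) + 2)
        ((3 * (N ^ 2 * (N + 1) / 12) * (exp (β * d) - 1) ^ 2
          + 2 * (2 * N * (N + 1) / 3) * (exp (β * d) - 1) + (2 * N + 1)) * (exp (β * d) * β)) d := by
      have h := ((((hE.pow 3).const_mul (N ^ 2 * (N + 1) / 12)).add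
        ((hE.pow 2).const_mul (2 * N * (N + 1) / 3))).add
        (hE.const_mul (2 * N + 1))).add_const 2
      refine h.congr_deriv ?_
      push_cast
      ring
    have hd2 : HasDerivAt (fun d : ℝ => d ^ 2) (2 * d) d := by
      simpa using hasDerivAt_pow 2 d
    have hnum : HasDerivAt (fun d : ℝ => (N - 1) * (d ^ 2 * (N ^ 2 * (N + 1) / 12
        * (exp (β * d) - 1) ^ 3 + 2 * N * (N + 1) / 3 * (exp (β * d) - 1) ^ 2
        + (2 * N + 1) * (exp (β * d) - 1) + 2)))
        ((N - 1) * (2 * d * (N ^ 2 * (N + 1) / 12 * (exp (β * d) - 1) ^ 3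
          + 2 * N * (N + 1) / 3 * (exp (β * d) - 1) ^ 2 + (2 * N + 1) * (exp (β * d) - 1) + 2)
        + d ^ 2 * ((3 * (N ^ 2 * (N + 1) / 12) * (exp (β * d) - 1) ^ 2
          + 2 * (2 * N * (N + 1) / 3) * (exp (β * d) - 1) + (2 * N + 1)) * (exp (β * d) * β)))) d :=
      (hd2.mul hP).const_mul (N - 1)
    have hden : HasDerivAt (fun d : ℝ => (exp (β * d) - 1) * (exp (β * d) + 1) ^ 2)
        (exp (β * d) * β * (exp (β * d) + 1) ^ 2
          + (exp (β * d) - 1) * (2 * (exp (β * d) + 1) * (exp (β * d) * β))) d := by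
      have h := hE.mul (hE1.pow 2)
      refine h.congr_deriv ?_
      simp only [Pi.pow_apply]
      push_cast
      ring
    exact hnum.div hden hden_ne
  -- g is strictly monotone
  have hmono : StrictMonoOn g (Set.Ioi (0 : ℝ)) := by
    apply strictMonoOn_of_deriv_pos (convex_Ioi 0)
    · intro d hd
      exact ((hder d hd).differentiableAt).continuousAt.continuousWithinAt
    · intro d hd
      rw [interior_Ioi] at hd
      have hd0 : (0:ℝ) < d := hd
      rw [(hder d hd).deriv]
      have he1 : 1 < exp (β * d) := by
        nlinarith [Real.add_one_le_exp (β * d), mul_pos hβ hd0]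
      have hu : 0 < exp (β * d) - 1 := by linarith
      have hx0 : 0 < β * d := mul_pos hβ hd0
      have hsinh : β * d < Real.sinh (β * d) := Real.self_lt_sinh_iff.2 hx0
      rw [Real.sinh_eq] at hsinh
      have hee : Real.exp (-(β * d)) * Real.exp (β * d) = 1 := by
        rw [← Real.exp_add]; simp
      have hxe : (β * d) * ((exp (β * d) - 1) + 1) ≤
          (exp (β * d) - 1) * ((exp (β * d) - 1) + 2) / 2 := by
        nlinarith [mul_lt_mul_of_pos_right hsinh (Real.exp_pos (β * d)), hee]
      have hkey := key_ineq N (exp (β * d) - 1) (β * d) _ _ hN hu hx0 hxe rfl rfl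
      have hN1 : (0:ℝ) < N - 1 := by linarith
      have hup2 : (0:ℝ) < (exp (β * d) - 1) + 2 := by linarith
      have hpos := mul_pos (mul_pos (mul_pos hN1 hup2) hd0) hkey
      apply div_pos _ (pow_pos (mul_pos hu (by positivity)) 2)
      nlinarith [hpos]
  -- transfer
  intro a ha b hb hab
  have h1 := heq a ha
  have h2 := heq b hb
  simp only [h1, h2]
  exact hmono ha hb hab
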